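/- In ℝ², let c = (2, 2), ρ_k = 1 + (k+1)²/2 and α_k = 1 + 3/(k+1) for k ≥ 0, and let clamp : ℝ² → ℝ² act componentwise by clamp(w)_i = max(−1, min(1, w_i)) (the projection onto the unit ball of the sup-norm). Let x^0 = (0, 0) and z^0 ∈ ℝ² with ‖z^0‖_∞ ≤ 1, and define recursively x^{k+1} = (1 + 1/ρ_k) x^k − (1/ρ_k) z^k + (1/ρ_k) c and z^{k+1} = clamp((z^k + x^{k+1})/α_k). Then for every k ≥ 0: ‖z^k‖_∞ ≤ 1; both coordinates of x^k satisfy 0 ≤ (x^k)_i < 75, with (x^k)_i > 0 for k ≥ 1; and consequently ‖x^k‖₂ ≤ 75√2 < 150. -/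
import Mathlib


/-- For the iteration of Example 4.4 of the paper (in `ℝ²`, with
`c = (2,2)`, `ρ_k = 1 + (k+1)²/2`, `α_k = 1 + 3/(k+1)`, componentwise clamping to `[−1,1]`,
`x⁰ = 0` and `‖z⁰‖_∞ ≤ 1`), one has `‖z^k‖_∞ ≤ 1`, `0 ≤ (x^k)_i < 75` (with strict
positivity for `k ≥ 1`), and `‖x^k‖₂ ≤ 75√2 < 150` for every `k`. -/
theorem stmt_8 (x z : ℕ → Fin 2 → ℝ) (ρ a : ℕ → ℝ)
    (hρ : ∀ k, ρ k = 1 + ((k : ℝ) + 1) ^ 2 / 2)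
    (ha : ∀ k, a k = 1 + 3 / ((k : ℝ) + 1))
    (hx0 : ∀ i, x 0 i = 0)
    (hz0 : ∀ i, |z 0 i| ≤ 1)
    (hx : ∀ k i, x (k + 1) i = (1 + 1 / ρ k) * x k i - (1 / ρ k) * z k i + (1 / ρ k) * 2)
    (hz : ∀ k i, z (k + 1) i = max (-1) (min 1 ((z k i + x (k + 1) i) / a k))) :
    (∀ k i, |z k i| ≤ 1) ∧
    (∀ k i, 0 ≤ x k i ∧ x k i < 75) ∧
    (∀ k, 1 ≤ k → ∀ i, 0 < x k i) ∧
    (∀ k, Real.sqrt (x k 0 ^ 2 + x k 1 ^ 2) ≤ 75 * Real.sqrt 2) ∧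
    75 * Real.sqrt 2 < 150 := by
  -- z stays in [-1,1]
  have hzb : ∀ k i, |z k i| ≤ 1 := by
    intro k
    induction k with
    | zero => exact hz0
    | succ n ih =>
      intro i
      rw [hz n i, abs_le]
      refine ⟨le_max_left _ _, max_le (by norm_num) (min_le_left _ _)⟩
  -- the reciprocal of ρ
  have hD : ∀ n : ℕ, (0:ℝ) < (n:ℝ)^2 + 2*n + 3 := by
    intro n; positivity
  have hr : ∀ n : ℕ, 1 / ρ n = 2 / ((n:ℝ)^2 + 2*n + 3) := by
    intro n
    rw [hρ n]
    rw [div_eq_div_iff (by positivity) (by positivity)]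
    ring
  -- key invariant
  have key : ∀ k, ∀ i, 0 ≤ x k i ∧ x k i + 3 ≤ 78 * (2*k+1) / (2*k+7) := by
    intro k
    induction k with
    | zero => intro i; rw [hx0]; norm_num
    | succ n ih =>
      intro i
      obtain ⟨h0, h1⟩ := ih i
      have hz1 := hzb n i
      rw [abs_le] at hz1
      have hDn := hD n
      have hrpos : (0:ℝ) < 2 / ((n:ℝ)^2 + 2*n + 3) := by positivity
      rw [hx n i, hr n]
      set r : ℝ := 2 / ((n:ℝ)^2 + 2*n + 3) with hrdef
      constructor
      · nlinarith [hz1.2, hrpos, h0]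
      · -- step: x_{n+1} + 3 ≤ (1+r)(x_n+3) ≤ 78(2n+3)/(2n+9)
        have step1 : (1 + r) * x n i - r * z n i + r * 2 + 3 ≤ (1 + r) * (x n i + 3) := by
          nlinarith [hz1.1, hrpos]
        have step2 : (1 + r) * (x n i + 3) ≤ (1 + r) * (78 * (2*n+1) / (2*n+7)) := by
          have : (0:ℝ) < 1 + r := by positivity
          exact mul_le_mul_of_nonneg_left h1 (le_of_lt this)
        have step3 : (1 + r) * (78 * (2*n+1) / (2*n+7)) ≤ 78 * (2*(n:ℝ)+3) / (2*n+9) := by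
          have h7 : (0:ℝ) < 2*(n:ℝ)+7 := by positivity
          have h9 : (0:ℝ) < 2*(n:ℝ)+9 := by positivity
          rw [hrdef]
          have e : (1 + 2 / ((n:ℝ)^2 + 2*n + 3)) * (78 * (2*(n:ℝ)+1) / (2*n+7)) =
              (((n:ℝ)^2 + 2*n + 3) + 2) * (78 * (2*(n:ℝ)+1)) / ((((n:ℝ)^2 + 2*n + 3)) * (2*n+7)) := by
            field_simp
          rw [e, div_le_div_iff₀ (by positivity) h9]
          nlinarith [sq_nonneg ((n:ℝ) - 2)]
        have : ((n:ℝ)+1) = (((n+1 : ℕ)):ℝ) := by push_cast; ring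
        push_cast
        calc (1 + r) * x n i - r * z n i + r * 2 + 3
            ≤ (1 + r) * (x n i + 3) := step1
          _ ≤ (1 + r) * (78 * (2*n+1) / (2*n+7)) := step2
          _ ≤ 78 * (2*(n:ℝ)+3) / (2*n+9) := step3
          _ = 78 * (2*((n:ℝ)+1)+1) / (2*((n:ℝ)+1)+7) := by ring_nf
  have hxlt : ∀ k i, 0 ≤ x k i ∧ x k i < 75 := by
    intro k i
    obtain ⟨h0, h1⟩ := key k i
    refine ⟨h0, ?_⟩
    have h7 : (0:ℝ) < 2*(k:ℝ)+7 := by positivity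
    have : 78 * (2*(k:ℝ)+1) / (2*k+7) < 78 := by
      rw [div_lt_iff₀ h7]; nlinarith
    linarith
  have hpos : ∀ k, 1 ≤ k → ∀ i, 0 < x k i := by
    intro k hk i
    obtain ⟨n, rfl⟩ := Nat.exists_eq_add_of_le hk
    have h0 := (hxlt (n) i).1
    have hz1 := hzb n i
    rw [abs_le] at hz1
    have hDn := hD n
    have hrpos : (0:ℝ) < 2 / ((n:ℝ)^2 + 2*n + 3) := by positivity
    have : (1 + n) = n + 1 := by ring
    rw [this, hx n i, hr n]
    nlinarith [hz1.2]
  have hsqrt2 : Real.sqrt 2 < 2 := by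
    nlinarith [Real.sq_sqrt (by norm_num : (2:ℝ) ≥ 0), Real.sqrt_nonneg 2]
  refine ⟨hzb, hxlt, hpos, ?_, by nlinarith⟩
  intro k
  obtain ⟨h00, h01⟩ := hxlt k 0
  obtain ⟨h10, h11⟩ := hxlt k 1
  have hb : x k 0 ^ 2 + x k 1 ^ 2 ≤ (75 * Real.sqrt 2) ^ 2 := by
    have : (75 * Real.sqrt 2) ^ 2 = 11250 := by
      rw [mul_pow, Real.sq_sqrt (by norm_num : (2:ℝ) ≥ 0)]; norm_num
    rw [this]; nlinarith
  calc Real.sqrt (x k 0 ^ 2 + x k 1 ^ 2) ≤ Real.sqrt ((75 * Real.sqrt 2) ^ 2) :=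
        Real.sqrt_le_sqrt hb
    _ = 75 * Real.sqrt 2 := Real.sqrt_sq (by positivity)
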